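/- arXiv:2507.09193 — 2 statements merged into one kernel-verified Lean document; each statement's English description precedes it below -/
import Mathlib

section
/- Let X, X₁ be binary random variables and N, S independent binary noise variables with H(S)=1, where Y₁ = X₁ ⊕ S and Y = (X ⊕ X₁, X ⊕ N), with (U,A) auxiliary random variables such that X₁ − (U,A) − (X,N) forms a Markov chain and (S,N) independent of (U,A,X,X₁). If H(X₁ | U, A) = 1 and H(X₁ | U, A, X⊕X₁, X⊕N) = 0, then H(X | U, A) + H(N) = H(X ⊕ N | U, A). -/
open Finset
open scoped Classical

namespace ISAC

variable {Ω : Type*} [Fintype Ω]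

/-- `p` is a probability mass function on the finite sample space `Ω`. -/
def IsPMF (p : Ω → ℝ) : Prop := (∀ ω, 0 ≤ p ω) ∧ ∑ ω, p ω = 1

/-- Probability that the random variable `X` takes the value `x`. -/
noncomputable def pr (p : Ω → ℝ) {α : Type*} (X : Ω → α) (x : α) : ℝ :=
  ∑ ω, if X ω = x then p ω else 0

/-- Shannon entropy (in bits) of the random variable `X`. -/
noncomputable def ent (p : Ω → ℝ) {α : Type*} [Fintype α] (X : Ω → α) : ℝ :=
  -∑ x, pr p X x * Real.logb 2 (pr p X x)

/-- Conditional entropy `H(X | Z)`. -/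
noncomputable def condEnt (p : Ω → ℝ) {α β : Type*} [Fintype α] [Fintype β] (X : Ω → α) (Z : Ω → β) : ℝ :=
  ent p (fun ω => (X ω, Z ω)) - ent p Z

/-- Mutual information `I(X;Y)`. -/
noncomputable def mi (p : Ω → ℝ) {α β : Type*} [Fintype α] [Fintype β] (X : Ω → α) (Y : Ω → β) : ℝ :=
  ent p X + ent p Y - ent p (fun ω => (X ω, Y ω))

/-- Conditional mutual information `I(X;Y|Z)`. -/
noncomputable def cmi (p : Ω → ℝ) {α β γ : Type*} [Fintype α] [Fintype β] [Fintype γ] (X : Ω → α) (Y : Ω → β) (Z : Ω → γ) : ℝ :=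
  ent p (fun ω => (X ω, Z ω)) + ent p (fun ω => (Y ω, Z ω))
    - ent p (fun ω => (X ω, Y ω, Z ω)) - ent p Z

/-- The Markov chain `A − B − C`: `A` and `C` are conditionally independent given `B`. -/
def Markov (p : Ω → ℝ) {α β γ : Type*} (A : Ω → α) (B : Ω → β) (C : Ω → γ) : Prop :=
  ∀ a b c, pr p (fun ω => (A ω, B ω, C ω)) (a, b, c) * pr p B b
    = pr p (fun ω => (A ω, B ω)) (a, b) * pr p (fun ω => (B ω, C ω)) (b, c)

/-- Independence of the random variables `A` and `B`. -/
def IndepRV (p : Ω → ℝ) {α β : Type*} (A : Ω → α) (B : Ω → β) : Prop :=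
  ∀ a b, pr p (fun ω => (A ω, B ω)) (a, b) = pr p A a * pr p B b

/-- Expectation of a real-valued function of the outcome. -/
noncomputable def expect (p : Ω → ℝ) (f : Ω → ℝ) : ℝ := ∑ ω, p ω * f ω

end ISAC

section AuxProof
open ISAC Real
variable {Ω : Type*} [Fintype Ω] {p : Ω → ℝ}

lemma pr_nonneg (hp : IsPMF p) {α : Type*} (F : Ω → α) (a : α) : 0 ≤ pr p F a :=
  Finset.sum_nonneg fun ω _ => by by_cases h : F ω = a <;> simp [h, hp.1 ω]

lemma pr_sum_one (hp : IsPMF p) {α : Type*} [Fintype α] (F : Ω → α) : ∑ a, pr p F a = 1 := by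
  unfold pr; rw [Finset.sum_comm]; simp [Finset.sum_ite_eq, hp.2]

lemma pr_marg {α β : Type*} [Fintype α] (F : Ω → α) (G : Ω → β) (b : β) :
    ∑ a, pr p (fun ω => (F ω, G ω)) (a, b) = pr p G b := by
  unfold pr; rw [Finset.sum_comm]
  refine Finset.sum_congr rfl fun ω _ => ?_
  by_cases h : G ω = b <;> simp [Prod.ext_iff, h, Finset.sum_ite_eq]

/-- Expansion of conditional entropy as a double sum. -/
lemma condEnt_expand {α γ : Type*} [Fintype α] [Fintype γ] (X : Ω → α) (Z : Ω → γ) :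
    condEnt p X Z = ∑ z, ∑ x, pr p (fun ω => (X ω, Z ω)) (x, z) *
      (Real.logb 2 (pr p Z z) - Real.logb 2 (pr p (fun ω => (X ω, Z ω)) (x, z))) := by
  have hA : ∑ z, ∑ x, pr p (fun ω => (X ω, Z ω)) (x, z) *
      (Real.logb 2 (pr p Z z) - Real.logb 2 (pr p (fun ω => (X ω, Z ω)) (x, z)))
      = (∑ z, pr p Z z * Real.logb 2 (pr p Z z))
        - ∑ z, ∑ x, pr p (fun ω => (X ω, Z ω)) (x, z) *
            Real.logb 2 (pr p (fun ω => (X ω, Z ω)) (x, z)) := by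
    rw [← Finset.sum_sub_distrib]
    refine Finset.sum_congr rfl fun z _ => ?_
    rw [Finset.sum_congr rfl (fun x (_ : x ∈ Finset.univ) => by
      ring : ∀ x ∈ Finset.univ, pr p (fun ω => (X ω, Z ω)) (x, z) *
        (Real.logb 2 (pr p Z z) - Real.logb 2 (pr p (fun ω => (X ω, Z ω)) (x, z)))
        = pr p (fun ω => (X ω, Z ω)) (x, z) * Real.logb 2 (pr p Z z)
          - pr p (fun ω => (X ω, Z ω)) (x, z) * Real.logb 2 (pr p (fun ω => (X ω, Z ω)) (x, z)))]
    rw [Finset.sum_sub_distrib, ← Finset.sum_mul, pr_marg]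
  have hB : ∑ x : α × γ, pr p (fun ω => (X ω, Z ω)) x *
        Real.logb 2 (pr p (fun ω => (X ω, Z ω)) x)
      = ∑ z, ∑ x, pr p (fun ω => (X ω, Z ω)) (x, z) *
          Real.logb 2 (pr p (fun ω => (X ω, Z ω)) (x, z)) := by
    rw [Fintype.sum_prod_type]
    exact Finset.sum_comm
  unfold condEnt ent
  rw [hB] at *
  rw [hA, hB]
  ring

lemma pr_le_marg (hp : IsPMF p) {α γ : Type*} [Fintype α] (X : Ω → α) (Z : Ω → γ)
    (x : α) (z : γ) : pr p (fun ω => (X ω, Z ω)) (x, z) ≤ pr p Z z := by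
  rw [← pr_marg X Z z]
  exact Finset.single_le_sum (f := fun x' => pr p (fun ω => (X ω, Z ω)) (x', z))
    (fun x' _ => pr_nonneg hp _ _) (Finset.mem_univ x)

lemma condEnt_term_nonneg (hp : IsPMF p) {α γ : Type*} [Fintype α] (X : Ω → α) (Z : Ω → γ)
    (x : α) (z : γ) : 0 ≤ pr p (fun ω => (X ω, Z ω)) (x, z) *
      (Real.logb 2 (pr p Z z) - Real.logb 2 (pr p (fun ω => (X ω, Z ω)) (x, z))) := by
  set j := pr p (fun ω => (X ω, Z ω)) (x, z) with hj
  rcases eq_or_lt_of_le (pr_nonneg hp (fun ω => (X ω, Z ω)) (x, z)) with h | h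
  · have hj0 : j = 0 := hj.trans h.symm
    rw [hj0]; simp
  · have hle : j ≤ pr p Z z := pr_le_marg hp X Z x z
    have hlog : Real.logb 2 j ≤ Real.logb 2 (pr p Z z) :=
      Real.logb_le_logb_of_le one_lt_two h hle
    have : 0 ≤ Real.logb 2 (pr p Z z) - Real.logb 2 j := by linarith
    exact mul_nonneg h.le this

/-- If `H(X|Z) = 0` then `X` is determined by `Z` on the support. -/
lemma condEnt_zero_unique (hp : IsPMF p) {α γ : Type*} [Fintype α] [Fintype γ]
    {X : Ω → α} {Z : Ω → γ} (h : condEnt p X Z = 0) :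
    ∀ x x' z, pr p (fun ω => (X ω, Z ω)) (x, z) ≠ 0 →
      pr p (fun ω => (X ω, Z ω)) (x', z) ≠ 0 → x = x' := by
  intro x x' z hx hx'
  by_contra hne
  rw [condEnt_expand X Z] at h
  have hterm : ∀ z x, pr p (fun ω => (X ω, Z ω)) (x, z) *
      (Real.logb 2 (pr p Z z) - Real.logb 2 (pr p (fun ω => (X ω, Z ω)) (x, z))) = 0 := by
    have h1 := (Finset.sum_eq_zero_iff_of_nonneg (fun z _ =>
      Finset.sum_nonneg fun x _ => condEnt_term_nonneg hp X Z x z)).1 h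
    intro z x
    exact (Finset.sum_eq_zero_iff_of_nonneg fun x _ =>
      condEnt_term_nonneg hp X Z x z).1 (h1 z (Finset.mem_univ z)) x (Finset.mem_univ x)
  have key : ∀ x, pr p (fun ω => (X ω, Z ω)) (x, z) ≠ 0 →
      pr p (fun ω => (X ω, Z ω)) (x, z) = pr p Z z := by
    intro x hx
    have hxpos : 0 < pr p (fun ω => (X ω, Z ω)) (x, z) :=
      lt_of_le_of_ne (pr_nonneg hp _ _) (Ne.symm hx)
    have hzpos : 0 < pr p Z z := lt_of_lt_of_le hxpos (pr_le_marg hp X Z x z)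
    have := hterm z x
    rw [mul_eq_zero] at this
    rcases this with h0 | h0
    · exact absurd h0 hx
    · have : Real.logb 2 (pr p Z z) = Real.logb 2 (pr p (fun ω => (X ω, Z ω)) (x, z)) := by
        linarith
      exact (Real.logb_injOn_pos one_lt_two (Set.mem_Ioi.2 hxpos) (Set.mem_Ioi.2 hzpos)
        this.symm)
  have e1 := key x hx
  have e2 := key x' hx'
  have hzpos : 0 < pr p Z z := by
    have := lt_of_le_of_ne (pr_nonneg hp (fun ω => (X ω, Z ω)) (x, z)) (Ne.symm hx)
    exact lt_of_lt_of_le this (pr_le_marg hp X Z x z)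
  have hsum : pr p (fun ω => (X ω, Z ω)) (x, z) + pr p (fun ω => (X ω, Z ω)) (x', z)
      ≤ pr p Z z := by
    rw [← pr_marg X Z z]
    rw [show pr p (fun ω => (X ω, Z ω)) (x, z) + pr p (fun ω => (X ω, Z ω)) (x', z)
      = ∑ x'' ∈ ({x, x'} : Finset α), pr p (fun ω => (X ω, Z ω)) (x'', z) from
      (Finset.sum_pair (f := fun x'' => pr p (fun ω => (X ω, Z ω)) (x'', z)) hne).symm]
    exact Finset.sum_le_sum_of_subset_of_nonneg (Finset.subset_univ _)
      (fun x'' _ _ => pr_nonneg hp _ _)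
  linarith

lemma halfkey_le {x m : ℝ} (hx : 0 < x) (hm : 0 < m) :
    x * (Real.logb 2 m - Real.logb 2 x) ≤ (m/2 - x)/Real.log 2 + x := by
  have hL : 0 < Real.log 2 := Real.log_pos one_lt_two
  have hq : 0 < m / (2*x) := by positivity
  have hlog : Real.log (m/(2*x)) ≤ m/(2*x) - 1 := Real.log_le_sub_one_of_pos hq
  have hsplit : Real.logb 2 m - Real.logb 2 x = (Real.log (m/(2*x)) + Real.log 2)/Real.log 2 := by
    rw [Real.log_div hm.ne' (by positivity), Real.log_mul two_ne_zero hx.ne']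
    rw [Real.logb, Real.logb]
    ring
  rw [hsplit]
  have step : x * ((Real.log (m/(2*x)) + Real.log 2)/Real.log 2)
      ≤ x * (((m/(2*x) - 1) + Real.log 2)/Real.log 2) := by
    gcongr
  refine le_trans step (le_of_eq ?_)
  field_simp

lemma halfkey_lt {x m : ℝ} (hx : 0 < x) (hm : 0 < m) (hne : x ≠ m/2) :
    x * (Real.logb 2 m - Real.logb 2 x) < (m/2 - x)/Real.log 2 + x := by
  have hL : 0 < Real.log 2 := Real.log_pos one_lt_two
  have hq : 0 < m / (2*x) := by positivity
  have hq1 : m / (2*x) ≠ 1 := by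
    intro h
    apply hne
    field_simp at h
    linarith
  have hlog : Real.log (m/(2*x)) < m/(2*x) - 1 := Real.log_lt_sub_one_of_pos hq hq1
  have hsplit : Real.logb 2 m - Real.logb 2 x = (Real.log (m/(2*x)) + Real.log 2)/Real.log 2 := by
    rw [Real.log_div hm.ne' (by positivity), Real.log_mul two_ne_zero hx.ne']
    rw [Real.logb, Real.logb]
    ring
  rw [hsplit]
  have step : x * ((Real.log (m/(2*x)) + Real.log 2)/Real.log 2)
      < x * (((m/(2*x) - 1) + Real.log 2)/Real.log 2) := by
    gcongr
  refine lt_of_lt_of_le step (le_of_eq ?_)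
  field_simp

lemma bin_le {a b : ℝ} (ha : 0 ≤ a) (hb : 0 ≤ b) :
    a * (Real.logb 2 (a+b) - Real.logb 2 a) + b * (Real.logb 2 (a+b) - Real.logb 2 b)
      ≤ a + b := by
  rcases eq_or_lt_of_le ha with h0 | hapos
  · rw [← h0]; simp; linarith
  rcases eq_or_lt_of_le hb with h0 | hbpos
  · rw [← h0]; simp; linarith
  have hm : 0 < a + b := by linarith
  have h1 := halfkey_le hapos hm
  have h2 := halfkey_le hbpos hm
  have : ((a+b)/2 - a)/Real.log 2 + (((a+b)/2 - b)/Real.log 2) = 0 := by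
    field_simp
    ring
  linarith

lemma bin_lt {a b : ℝ} (ha : 0 ≤ a) (hb : 0 ≤ b) (hne : a ≠ b) :
    a * (Real.logb 2 (a+b) - Real.logb 2 a) + b * (Real.logb 2 (a+b) - Real.logb 2 b)
      < a + b := by
  rcases eq_or_lt_of_le ha with h0 | hapos
  · rw [← h0]
    simp
    rcases eq_or_lt_of_le hb with h0' | hbpos
    · exact absurd (h0.symm.trans h0') hne
    · exact hbpos
  rcases eq_or_lt_of_le hb with h0 | hbpos
  · rw [← h0]
    simp
    linarith [hapos]
  have hm : 0 < a + b := by linarith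
  have hane : a ≠ (a+b)/2 := by
    intro h; apply hne; linarith [h]
  have h1 := halfkey_lt hapos hm hane
  have h2 := halfkey_le hbpos hm
  have : ((a+b)/2 - a)/Real.log 2 + (((a+b)/2 - b)/Real.log 2) = 0 := by
    field_simp
    ring
  linarith

/-- If `H(X₁|V) = 1` for binary `X₁`, then `X₁` is conditionally uniform. -/
lemma uniform_of_condEnt_one (hp : IsPMF p) {γ : Type*} [Fintype γ]
    {X₁ : Ω → Bool} {V : Ω → γ} (h1 : condEnt p X₁ V = 1) :
    ∀ b v, pr p (fun ω => (X₁ ω, V ω)) (b, v) = pr p V v / 2 := by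
  have hm : ∀ v, pr p V v = pr p (fun ω => (X₁ ω, V ω)) (true, v)
      + pr p (fun ω => (X₁ ω, V ω)) (false, v) := by
    intro v; rw [← pr_marg X₁ V v, Fintype.sum_bool]
  have hexp := condEnt_expand (p := p) X₁ V
  rw [h1] at hexp
  have hle : ∀ v, ∑ x, pr p (fun ω => (X₁ ω, V ω)) (x, v) *
      (Real.logb 2 (pr p V v) - Real.logb 2 (pr p (fun ω => (X₁ ω, V ω)) (x, v)))
      ≤ pr p V v := by
    intro v
    rw [Fintype.sum_bool, hm v]
    exact bin_le (pr_nonneg hp _ _) (pr_nonneg hp _ _)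
  have hJeq : ∀ v, pr p (fun ω => (X₁ ω, V ω)) (true, v)
      = pr p (fun ω => (X₁ ω, V ω)) (false, v) := by
    intro v
    by_contra hne
    have hlt : ∑ x, pr p (fun ω => (X₁ ω, V ω)) (x, v) *
        (Real.logb 2 (pr p V v) - Real.logb 2 (pr p (fun ω => (X₁ ω, V ω)) (x, v)))
        < pr p V v := by
      rw [Fintype.sum_bool, hm v]
      exact bin_lt (pr_nonneg hp _ _) (pr_nonneg hp _ _) hne
    have : ∑ v', ∑ x, pr p (fun ω => (X₁ ω, V ω)) (x, v') *
        (Real.logb 2 (pr p V v') - Real.logb 2 (pr p (fun ω => (X₁ ω, V ω)) (x, v')))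
        < ∑ v', pr p V v' :=
      Finset.sum_lt_sum (fun v' _ => hle v') ⟨v, Finset.mem_univ v, hlt⟩
    rw [← hexp, pr_sum_one hp V] at this
    exact lt_irrefl 1 this
  intro b v
  have := hm v
  have := hJeq v
  cases b <;> linarith

lemma pr_exists_of_ne_zero {α : Type*} {F : Ω → α} {a : α} (h : pr p F a ≠ 0) :
    ∃ ω, p ω ≠ 0 ∧ F ω = a := by
  obtain ⟨ω, _, hω⟩ := Finset.exists_ne_zero_of_sum_ne_zero h
  by_cases hF : F ω = a
  · exact ⟨ω, by simpa [hF] using hω, hF⟩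
  · simp [hF] at hω

lemma pr_ne_zero_at (hp : IsPMF p) {α : Type*} (F : Ω → α) {ω : Ω} (h : p ω ≠ 0) :
    pr p F (F ω) ≠ 0 := by
  have hpos : 0 < p ω := lt_of_le_of_ne (hp.1 ω) (Ne.symm h)
  have : p ω ≤ pr p F (F ω) := by
    have := Finset.single_le_sum (f := fun ω' => if F ω' = F ω then p ω' else 0)
      (fun ω' _ => by by_cases hh : F ω' = F ω <;> simp [hh, hp.1 ω']) (Finset.mem_univ ω)
    simp at this; exact this
  exact ne_of_gt (lt_of_lt_of_le hpos this)

/-- Entropy preserved under a.s. invertible recoding. -/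
lemma ent_recode (hp : IsPMF p) {α β : Type*} [Fintype α] [Fintype β]
    (T : Ω → α) (Yv : Ω → β) (f : α → β) (g : β → α)
    (hf : ∀ ω, Yv ω = f (T ω)) (hg : ∀ ω, p ω ≠ 0 → g (Yv ω) = T ω) :
    ent p Yv = ent p T := by
  have key : ∀ a, pr p T a ≠ 0 → g (f a) = a ∧ pr p Yv (f a) = pr p T a := by
    intro a ha
    obtain ⟨ω, hω, hTa⟩ := pr_exists_of_ne_zero ha
    have hgf : g (f a) = a := by rw [← hTa, ← hf ω, hg ω hω, hTa]
    refine ⟨hgf, ?_⟩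
    refine Finset.sum_congr rfl fun ω' _ => ?_
    by_cases hpω : p ω' = 0
    · by_cases h1 : Yv ω' = f a <;> by_cases h2 : T ω' = a <;> simp [h1, h2, hpω]
    · have hiff : Yv ω' = f a ↔ T ω' = a := by
        constructor
        · intro hh; rw [← hg ω' hpω, hh, hgf]
        · intro hh; rw [hf ω', hh]
      by_cases h2 : T ω' = a <;> simp [hiff, h2]
  unfold ent
  congr 1
  rw [← Finset.sum_filter_of_ne (s := Finset.univ)
      (f := fun b => pr p Yv b * Real.logb 2 (pr p Yv b))
      (p := fun b => pr p Yv b ≠ 0) (by intro b _ hb; intro h0; apply hb; simp [h0]),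
      ← Finset.sum_filter_of_ne (s := Finset.univ)
      (f := fun a => pr p T a * Real.logb 2 (pr p T a))
      (p := fun a => pr p T a ≠ 0) (by intro a _ ha; intro h0; apply ha; simp [h0])]
  refine Finset.sum_nbij' (i := fun b => g b) (j := fun a => f a) ?_ ?_ ?_ ?_ ?_
  · intro b hb
    simp only [Finset.mem_filter, Finset.mem_univ, true_and] at hb ⊢
    obtain ⟨ω, hω, hYb⟩ := pr_exists_of_ne_zero hb
    rw [← hYb, hg ω hω]
    exact pr_ne_zero_at hp T hω
  · intro a ha
    simp only [Finset.mem_filter, Finset.mem_univ, true_and] at ha ⊢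
    rw [(key a ha).2]; exact ha
  · intro b hb
    simp only [Finset.mem_filter, Finset.mem_univ, true_and] at hb
    obtain ⟨ω, hω, hYb⟩ := pr_exists_of_ne_zero hb
    have h1 : g b = T ω := by rw [← hYb, hg ω hω]
    show f (g b) = b
    rw [h1, ← hf ω, hYb]
  · intro a ha
    simp only [Finset.mem_filter, Finset.mem_univ, true_and] at ha
    exact (key a ha).1
  · intro b hb
    simp only [Finset.mem_filter, Finset.mem_univ, true_and] at hb
    obtain ⟨ω, hω, hYb⟩ := pr_exists_of_ne_zero hb
    have hgb : g b = T ω := by rw [← hYb, hg ω hω]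
    have : pr p Yv (f (g b)) = pr p T (g b) := (key (g b) (by rw [hgb]; exact pr_ne_zero_at hp T hω)).2
    have hfgb : f (g b) = b := by rw [hgb, ← hf ω, hYb]
    rw [hfgb] at this
    rw [this]

/-- Entropy of independent pair is sum. -/
lemma ent_pair_of_indep (hp : IsPMF p) {α β : Type*} [Fintype α] [Fintype β]
    {A : Ω → α} {B : Ω → β} (h : IndepRV p A B) :
    ent p (fun ω => (A ω, B ω)) = ent p A + ent p B := by
  unfold ent
  rw [Fintype.sum_prod_type]
  have : ∀ a b, pr p (fun ω => (A ω, B ω)) (a, b) * Real.logb 2 (pr p (fun ω => (A ω, B ω)) (a, b))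
      = pr p A a * pr p B b * Real.logb 2 (pr p A a)
        + pr p A a * pr p B b * Real.logb 2 (pr p B b) := by
    intro a b
    rw [h a b]
    by_cases ha : pr p A a = 0
    · simp [ha]
    by_cases hb : pr p B b = 0
    · simp [hb]
    rw [Real.logb_mul ha hb]; ring
  rw [Finset.sum_congr rfl fun a _ => Finset.sum_congr rfl fun b _ => this a b]
  have e1 : ∀ a : α, ∑ b, (pr p A a * pr p B b * Real.logb 2 (pr p A a)
      + pr p A a * pr p B b * Real.logb 2 (pr p B b))
      = pr p A a * Real.logb 2 (pr p A a) + pr p A a * ∑ b, pr p B b * Real.logb 2 (pr p B b) := by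
    intro a
    rw [Finset.sum_add_distrib]
    congr 1
    · rw [← Finset.sum_mul]
      rw [show ∑ b, pr p A a * pr p B b = pr p A a * ∑ b, pr p B b by rw [Finset.mul_sum]]
      rw [pr_sum_one hp B]; ring
    · rw [Finset.mul_sum]
      exact Finset.sum_congr rfl fun b _ => by ring
  rw [Finset.sum_congr rfl fun a _ => e1 a, Finset.sum_add_distrib, ← Finset.sum_mul,
    pr_sum_one hp A]
  ring

lemma pr_congr {α β : Type*} {F : Ω → α} {G : Ω → β} {a : α} {b : β}
    (h : ∀ ω, F ω = a ↔ G ω = b) : pr p F a = pr p G b :=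
  Finset.sum_congr rfl fun ω _ => by by_cases hh : G ω = b <;> simp [hh, h ω]

lemma pr_marg' {α β : Type*} [Fintype β] (F : Ω → α) (G : Ω → β) (a : α) :
    ∑ b, pr p (fun ω => (F ω, G ω)) (a, b) = pr p F a := by
  unfold pr; rw [Finset.sum_comm]
  refine Finset.sum_congr rfl fun ω _ => ?_
  by_cases h : F ω = a <;> simp [Prod.ext_iff, h, Finset.sum_ite_eq]


end AuxProof


open ISAC in
/-- For binary `X, X₁, N, S` with `Y = (X ⊕ X₁, X ⊕ N)`, Markov chain `X₁ − (U,A) − (X,N)`,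
`(S,N)` independent of `(U,A,X,X₁)`, and `H(S) = 1`: if `H(X₁|UA) = 1` and
`H(X₁ | UA, X⊕X₁, X⊕N) = 0`, then `H(X|UA) + H(N) = H(X⊕N | UA)`. -/
theorem stmt_10 {Ω 𝒰 𝒜 : Type*} [Fintype Ω] [Fintype 𝒰] [Fintype 𝒜]
    (p : Ω → ℝ) (hp : IsPMF p)
    (X X₁ N S : Ω → Bool) (U : Ω → 𝒰) (A : Ω → 𝒜)
    (Y₁ : Ω → Bool) (hY₁ : ∀ ω, Y₁ ω = Bool.xor (X₁ ω) (S ω))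
    (Y : Ω → Bool × Bool)
    (hY : ∀ ω, Y ω = (Bool.xor (X ω) (X₁ ω), Bool.xor (X ω) (N ω)))
    (hS : ent p S = 1)
    (hMarkov : Markov p X₁ (fun ω => (U ω, A ω)) (fun ω => (X ω, N ω)))
    (hIndep : IndepRV p (fun ω => (S ω, N ω)) (fun ω => (U ω, A ω, X ω, X₁ ω)))
    (h1 : condEnt p X₁ (fun ω => (U ω, A ω)) = 1)
    (h2 : condEnt p X₁
        (fun ω => (U ω, A ω, Bool.xor (X ω) (X₁ ω), Bool.xor (X ω) (N ω))) = 0) :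
    condEnt p X (fun ω => (U ω, A ω)) + ent p N
      = condEnt p (fun ω => Bool.xor (X ω) (N ω)) (fun ω => (U ω, A ω)) := by
  classical
  -- X₁ is conditionally uniform given (U,A)
  have hUnif : ∀ b v, pr p (fun ω => (X₁ ω, (U ω, A ω))) (b, v)
      = pr p (fun ω => (U ω, A ω)) v / 2 := uniform_of_condEnt_one hp h1
  -- both values of X₁ are compatible with any positive ((U,A),(X,N)) atom
  have hsplit : ∀ (v : 𝒰 × 𝒜) (xn : Bool × Bool) (b : Bool),
      pr p (fun ω => ((U ω, A ω), (X ω, N ω))) (v, xn) ≠ 0 →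
      pr p (fun ω => (X₁ ω, (U ω, A ω), (X ω, N ω))) (b, v, xn) ≠ 0 := by
    intro v xn b hvxn
    have hM := hMarkov b v xn
    have hv : pr p (fun ω => (U ω, A ω)) v ≠ 0 := by
      have hle : pr p (fun ω => ((U ω, A ω), (X ω, N ω))) (v, xn)
          ≤ pr p (fun ω => (U ω, A ω)) v := by
        rw [← pr_marg' (fun ω => (U ω, A ω)) (fun ω => (X ω, N ω)) v]
        exact Finset.single_le_sum (fun xn' _ => pr_nonneg hp _ _) (Finset.mem_univ xn)
      have hpos := lt_of_le_of_ne (pr_nonneg hp _ _) (Ne.symm hvxn)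
      exact ne_of_gt (lt_of_lt_of_le hpos hle)
    rw [hUnif b v] at hM
    have heq : pr p (fun ω => (X₁ ω, (U ω, A ω), (X ω, N ω))) (b, v, xn)
        = pr p (fun ω => ((U ω, A ω), (X ω, N ω))) (v, xn) / 2 := by
      apply mul_right_cancel₀ hv
      rw [hM]; ring
    rw [heq]
    exact div_ne_zero hvxn two_ne_zero
  -- X₁ is a.s. determined from (U, A, X⊕X₁, X⊕N)
  have huniq := condEnt_zero_unique hp h2
  -- X is a.s. determined by ((U,A), X⊕N)
  have hXdet : ∀ ω ω', p ω ≠ 0 → p ω' ≠ 0 → U ω = U ω' → A ω = A ω' →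
      Bool.xor (X ω) (N ω) = Bool.xor (X ω') (N ω') → X ω = X ω' := by
    intro ω ω' hω hω' hU hA hW
    by_contra hxx
    have hx' : X ω' = !(X ω) := by
      revert hxx
      cases X ω <;> cases X ω' <;> simp
    have hA1 : pr p (fun ω'' => (X₁ ω'', (U ω'', A ω''), (X ω'', N ω'')))
        (false, (U ω, A ω), (X ω, N ω)) ≠ 0 :=
      hsplit _ _ _ (pr_ne_zero_at hp (fun ω'' => ((U ω'', A ω''), (X ω'', N ω''))) hω)
    have hA2 : pr p (fun ω'' => (X₁ ω'', (U ω'', A ω''), (X ω'', N ω'')))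
        (true, (U ω', A ω'), (X ω', N ω')) ≠ 0 :=
      hsplit _ _ _ (pr_ne_zero_at hp (fun ω'' => ((U ω'', A ω''), (X ω'', N ω''))) hω')
    obtain ⟨ω₁, hpω₁, he₁⟩ := pr_exists_of_ne_zero hA1
    obtain ⟨ω₂, hpω₂, he₂⟩ := pr_exists_of_ne_zero hA2
    simp only [Prod.mk.injEq] at he₁ he₂
    obtain ⟨hb₁, ⟨hU₁, hA₁'⟩, hX₁', hN₁⟩ := he₁
    obtain ⟨hb₂, ⟨hU₂, hA₂'⟩, hX₂', hN₂⟩ := he₂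
    have k₁ : pr p (fun ω'' => (X₁ ω'',
        (U ω'', A ω'', Bool.xor (X ω'') (X₁ ω''), Bool.xor (X ω'') (N ω''))))
        (X₁ ω₁, (U ω₁, A ω₁, Bool.xor (X ω₁) (X₁ ω₁), Bool.xor (X ω₁) (N ω₁))) ≠ 0 :=
      pr_ne_zero_at hp _ hpω₁
    have k₂ : pr p (fun ω'' => (X₁ ω'',
        (U ω'', A ω'', Bool.xor (X ω'') (X₁ ω''), Bool.xor (X ω'') (N ω''))))
        (X₁ ω₂, (U ω₂, A ω₂, Bool.xor (X ω₂) (X₁ ω₂), Bool.xor (X ω₂) (N ω₂))) ≠ 0 :=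
      pr_ne_zero_at hp _ hpω₂
    rw [hb₁, hU₁, hA₁', hX₁', hN₁] at k₁
    rw [hb₂, hU₂, hA₂', hX₂', hN₂] at k₂
    have hzeq : (U ω', A ω', Bool.xor (X ω') true, Bool.xor (X ω') (N ω'))
        = (U ω, A ω, Bool.xor (X ω) false, Bool.xor (X ω) (N ω)) := by
      rw [← hU, ← hA, ← hW, hx']
      simp
    rw [hzeq] at k₂
    exact Bool.false_ne_true (huniq false true _ k₁ k₂)
  -- xor cancellation
  have hxorN : ∀ ω, Bool.xor (X ω) (Bool.xor (X ω) (N ω)) = N ω := by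
    intro ω; cases X ω <;> cases N ω <;> rfl
  -- entropy recoding: H(X⊕N, (U,A)) = H(X, N, (U,A))
  have hGex : ∀ wv : Bool × (𝒰 × 𝒜), ∃ t : Bool × Bool × (𝒰 × 𝒜), ∀ ω, p ω ≠ 0 →
      (Bool.xor (X ω) (N ω), (U ω, A ω)) = wv → (X ω, N ω, (U ω, A ω)) = t := by
    intro wv
    by_cases hc : ∃ ω, p ω ≠ 0 ∧ (Bool.xor (X ω) (N ω), (U ω, A ω)) = wv
    · obtain ⟨ω₀, hp0, heq0⟩ := hc
      refine ⟨(X ω₀, N ω₀, (U ω₀, A ω₀)), fun ω hω hval => ?_⟩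
      rw [← heq0] at hval
      simp only [Prod.mk.injEq] at hval
      obtain ⟨hWeq, hUeq, hAeq⟩ := hval
      have hXeq : X ω = X ω₀ := hXdet _ _ hω hp0 hUeq hAeq hWeq
      have hNeq : N ω = N ω₀ := by
        rw [hXeq] at hWeq
        cases hXv : X ω₀ <;> rw [hXv] at hWeq <;> simpa using hWeq
      rw [hXeq, hNeq, hUeq, hAeq]
    · exact ⟨(false, false, wv.2), fun ω hω hval => absurd ⟨ω, hω, hval⟩ hc⟩
  choose gdec hgdec using hGex
  have entI : ent p (fun ω => (Bool.xor (X ω) (N ω), (U ω, A ω)))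
      = ent p (fun ω => (X ω, N ω, (U ω, A ω))) :=
    ent_recode hp (fun ω => (X ω, N ω, (U ω, A ω))) _
      (fun t => (Bool.xor t.1 t.2.1, t.2.2)) gdec
      (fun ω => rfl) (fun ω hω => (hgdec _ ω hω rfl).symm)
  -- entropy recoding: H(X, N, (U,A)) = H((X,(U,A)), N)
  have entII : ent p (fun ω => (X ω, N ω, (U ω, A ω)))
      = ent p (fun ω => ((X ω, (U ω, A ω)), N ω)) :=
    ent_recode hp (fun ω => ((X ω, (U ω, A ω)), N ω)) _
      (fun q => (q.1.1, q.2, q.1.2)) (fun t => ((t.1, t.2.2), t.2.1))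
      (fun ω => rfl) (fun ω _ => rfl)
  -- marginalization identities
  have hmarg1 : ∀ (x : Bool) (u : 𝒰) (a : 𝒜) (n : Bool),
      pr p (fun ω => ((X ω, (U ω, A ω)), N ω)) ((x, (u, a)), n)
      = ∑ s, ∑ x₁, pr p (fun ω => ((S ω, N ω), (U ω, A ω, X ω, X₁ ω)))
          ((s, n), (u, a, x, x₁)) := by
    intro x u a n
    calc pr p (fun ω => ((X ω, (U ω, A ω)), N ω)) ((x, (u, a)), n)
        = pr p (fun ω => (N ω, X ω, U ω, A ω)) (n, x, u, a) :=
          pr_congr fun ω => by simp only [Prod.mk.injEq]; tauto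
      _ = ∑ s, pr p (fun ω => (S ω, N ω, X ω, U ω, A ω)) (s, n, x, u, a) :=
          (pr_marg S (fun ω => (N ω, X ω, U ω, A ω)) (n, x, u, a)).symm
      _ = ∑ s, ∑ x₁, pr p (fun ω => (X₁ ω, S ω, N ω, X ω, U ω, A ω)) (x₁, s, n, x, u, a) :=
          Finset.sum_congr rfl fun s _ =>
            (pr_marg X₁ (fun ω => (S ω, N ω, X ω, U ω, A ω)) (s, n, x, u, a)).symm
      _ = ∑ s, ∑ x₁, pr p (fun ω => ((S ω, N ω), (U ω, A ω, X ω, X₁ ω)))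
            ((s, n), (u, a, x, x₁)) :=
          Finset.sum_congr rfl fun s _ => Finset.sum_congr rfl fun x₁ _ =>
            pr_congr fun ω => by simp only [Prod.mk.injEq]; tauto
  have hmarg2 : ∀ (x : Bool) (u : 𝒰) (a : 𝒜),
      (∑ x₁, pr p (fun ω => (U ω, A ω, X ω, X₁ ω)) (u, a, x, x₁))
      = pr p (fun ω => (X ω, (U ω, A ω))) (x, (u, a)) := by
    intro x u a
    calc (∑ x₁, pr p (fun ω => (U ω, A ω, X ω, X₁ ω)) (u, a, x, x₁))
        = ∑ x₁, pr p (fun ω => (X₁ ω, X ω, U ω, A ω)) (x₁, x, u, a) :=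
          Finset.sum_congr rfl fun x₁ _ =>
            pr_congr fun ω => by simp only [Prod.mk.injEq]; tauto
      _ = pr p (fun ω => (X ω, U ω, A ω)) (x, u, a) :=
          pr_marg X₁ (fun ω => (X ω, U ω, A ω)) (x, u, a)
      _ = pr p (fun ω => (X ω, (U ω, A ω))) (x, (u, a)) := rfl
  -- independence of (X,(U,A)) and N
  have hind : IndepRV p (fun ω => (X ω, (U ω, A ω))) N := by
    rintro ⟨x, u, a⟩ n
    rw [hmarg1 x u a n]
    rw [Finset.sum_congr rfl fun s (_ : s ∈ Finset.univ) =>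
      Finset.sum_congr rfl fun x₁ (_ : x₁ ∈ Finset.univ) => hIndep (s, n) (u, a, x, x₁)]
    rw [← Finset.sum_mul_sum]
    rw [pr_marg S N n, hmarg2]
    ring
  have hpair := ent_pair_of_indep hp hind
  unfold condEnt
  rw [entI, entII, hpair]
  ring
end

section
/- For the Cover–Kim sensing example with binary X, X₁, independent binary states S, N, Y₁ = SX + X (real sum), Y_r = X₁ ⊕ N, Y_d = S·X, S_d = S, and Hamming distortion: setting a = P(X=1), b = P(X₁=1), the capacity-distortion function equals C(D) = max over a,b ∈ [0,1] with (1−a)·min(P_S, 1−P_S) ≤ D of min{ H₂(a), H₂(b * P_N) − H₂(P_N) + H₂(a P_S) − a H₂(P_S) }, where * is binary convolution. -/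
open Finset
open scoped Classical

open ISAC

/-- The binary entropy function `H₂(t)`. -/
noncomputable def H2 (t : ℝ) : ℝ := -(t * Real.logb 2 t) - (1 - t) * Real.logb 2 (1 - t)

/-- The binary convolution `p * q = p(1−q) + (1−p)q`. -/
def bconv (p q : ℝ) : ℝ := p * (1 - q) + (1 - p) * q

/-- Sample space `(X, X₁, S, N)` for the Cover–Kim sensing example. -/
abbrev CKOmega := Bool × Bool × Bool × Bool

/-- Bernoulli mass function with parameter `t`. -/
noncomputable def bern (t : ℝ) : Bool → ℝ := fun b => if b then t else 1 - t

/-- The product distribution of independent `X ~ Bern(a)`, `X₁ ~ Bern(b)`, `S ~ Bern(ps)`,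
`N ~ Bern(pn)`. -/
noncomputable def pCK (a b ps pn : ℝ) : CKOmega → ℝ :=
  fun ω => bern a ω.1 * bern b ω.2.1 * bern ps ω.2.2.1 * bern pn ω.2.2.2

def Xck (ω : CKOmega) : Bool := ω.1
def X1ck (ω : CKOmega) : Bool := ω.2.1
def Sck (ω : CKOmega) : Bool := ω.2.2.1
def Nck (ω : CKOmega) : Bool := ω.2.2.2

/-- `Y₁ = S·X + X` as a real sum, taking values in `{0,1,2}`. -/
def Y1ck (ω : CKOmega) : Fin 3 := if ω.1 then (if ω.2.2.1 then 2 else 1) else 0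

/-- `Y_d = S·X`. -/
def Ydck (ω : CKOmega) : Bool := ω.1 && ω.2.2.1

/-- `Y_r = X₁ ⊕ N`. -/
def Yrck (ω : CKOmega) : Bool := Bool.xor ω.2.1 ω.2.2.2

/-- Expected Hamming distortion of the optimal estimator `Ŝ_d(x, y_d)` based on `(X, Y_d)`. -/
noncomputable def distCK (p : CKOmega → ℝ) : ℝ :=
  ∑ x : Bool, ∑ yd : Bool,
    Finset.univ.inf' Finset.univ_nonempty
      (fun s' : Bool => ∑ s : Bool,
        pr p (fun ω => (Sck ω, Xck ω, Ydck ω)) (s, x, yd) * (if Bool.xor s s' then 1 else 0))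


lemma mul_logb_mul (x y : ℝ) : (x*y) * Real.logb 2 (x*y) = (x*y) * Real.logb 2 x + (x*y) * Real.logb 2 y := by
  rcases eq_or_ne x 0 with h|h; · simp [h]
  rcases eq_or_ne y 0 with h'|h'; · simp [h']
  rw [Real.logb_mul h h']; ring

set_option maxHeartbeats 4000000 in
lemma miXYd (a b ps pn : ℝ) :
    mi (pCK a b ps pn) Xck Ydck = H2 (a * ps) - a * H2 ps := by
  have h1 := mul_logb_mul a ps
  have h2 := mul_logb_mul a (1-ps)
  unfold mi ent pr pCK bern Xck Ydck H2
  simp only [Fintype.sum_prod_type, Fintype.sum_bool, Prod.mk.injEq]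
  norm_num
  ring_nf
  ring_nf at h1 h2
  linarith [h1, h2]

set_option maxHeartbeats 4000000 in
lemma miX1Yr (a b ps pn : ℝ) :
    mi (pCK a b ps pn) X1ck Yrck = H2 (bconv b pn) - H2 pn := by
  have h1 := mul_logb_mul b pn
  have h2 := mul_logb_mul b (1-pn)
  have h3 := mul_logb_mul (1-b) pn
  have h4 := mul_logb_mul (1-b) (1-pn)
  unfold mi ent pr pCK bern X1ck Yrck H2 bconv
  simp only [Fintype.sum_prod_type, Fintype.sum_bool, Prod.mk.injEq]
  norm_num
  ring_nf
  ring_nf at h1 h2 h3 h4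
  linarith [h1, h2, h3, h4]

set_option maxHeartbeats 4000000 in
lemma miXY1Yd (a b ps pn : ℝ) :
    mi (pCK a b ps pn) Xck (fun ω => (Y1ck ω, Ydck ω)) = H2 a := by
  unfold mi ent pr pCK bern Xck Y1ck Ydck H2
  simp (config := { decide := true }) only [Fintype.sum_prod_type, Fintype.sum_bool,
    Fin.sum_univ_three, Prod.mk.injEq, if_true, if_false]
  norm_num
  ring_nf

set_option maxHeartbeats 4000000 in
lemma distCKeq (a b ps pn : ℝ) (ha0 : 0 ≤ a) (ha1 : a ≤ 1) (hp0 : 0 ≤ ps) (hp1 : ps ≤ 1) :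
    distCK (pCK a b ps pn) = (1-a) * min ps (1-ps) := by
  unfold distCK pr pCK bern Sck Xck Ydck
  simp (config := { decide := true }) only [Fintype.sum_prod_type, Fintype.sum_bool,
    Prod.mk.injEq, if_true, if_false, Fintype.univ_bool, Finset.inf'_insert,
    Finset.inf'_singleton]
  norm_num
  ring_nf
  rcases le_total ps (1-ps) with h|h
  · rw [show ps ⊓ (1-ps) = ps from min_eq_left h,
      show (0:ℝ) ⊓ (a*ps) = 0 from min_eq_left (by nlinarith),
      show (a - a*ps) ⊓ 0 = 0 from min_eq_right (by nlinarith),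
      show (1 - a + a*ps - ps) ⊓ (-(a*ps) + ps) = -(a*ps)+ps from min_eq_right (by nlinarith)]
    ring
  · rw [show ps ⊓ (1-ps) = 1-ps from min_eq_right h,
      show (0:ℝ) ⊓ (a*ps) = 0 from min_eq_left (by nlinarith),
      show (a - a*ps) ⊓ 0 = 0 from min_eq_right (by nlinarith),
      show (1 - a + a*ps - ps) ⊓ (-(a*ps) + ps) = 1 - a + a*ps - ps from min_eq_left (by nlinarith)]
    ring

/-- **Capacity–distortion function of the Cover–Kim sensing example.**
With `a = P(X=1)`, `b = P(X₁=1)`, the capacity-distortion function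
`C(D) = max_{P_X P_{X₁} ∈ 𝒫_D} min{ I(X;Y₁Y_d), I(X₁;Y_r) + I(X;Y_d) }`
equals `max` over `a, b ∈ [0,1]` with `(1−a)·min(P_S, 1−P_S) ≤ D` of
`min{ H₂(a), H₂(b*P_N) − H₂(P_N) + H₂(aP_S) − aH₂(P_S) }`. -/
theorem stmt_17 (ps pn D : ℝ) (hps : ps ∈ Set.Icc (0 : ℝ) 1) (hpn : pn ∈ Set.Icc (0 : ℝ) 1) :
    sSup {r : ℝ | ∃ a b : ℝ, a ∈ Set.Icc (0 : ℝ) 1 ∧ b ∈ Set.Icc (0 : ℝ) 1 ∧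
        distCK (pCK a b ps pn) ≤ D ∧
        r = min (mi (pCK a b ps pn) Xck (fun ω => (Y1ck ω, Ydck ω)))
            (mi (pCK a b ps pn) X1ck Yrck + mi (pCK a b ps pn) Xck Ydck)}
      = sSup {r : ℝ | ∃ a b : ℝ, a ∈ Set.Icc (0 : ℝ) 1 ∧ b ∈ Set.Icc (0 : ℝ) 1 ∧
        (1 - a) * min ps (1 - ps) ≤ D ∧
        r = min (H2 a) (H2 (bconv b pn) - H2 pn + H2 (a * ps) - a * H2 ps)} := by
  have hsets : {r : ℝ | ∃ a b : ℝ, a ∈ Set.Icc (0 : ℝ) 1 ∧ b ∈ Set.Icc (0 : ℝ) 1 ∧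
        distCK (pCK a b ps pn) ≤ D ∧
        r = min (mi (pCK a b ps pn) Xck (fun ω => (Y1ck ω, Ydck ω)))
            (mi (pCK a b ps pn) X1ck Yrck + mi (pCK a b ps pn) Xck Ydck)}
      = {r : ℝ | ∃ a b : ℝ, a ∈ Set.Icc (0 : ℝ) 1 ∧ b ∈ Set.Icc (0 : ℝ) 1 ∧
        (1 - a) * min ps (1 - ps) ≤ D ∧
        r = min (H2 a) (H2 (bconv b pn) - H2 pn + H2 (a * ps) - a * H2 ps)} := by
    ext r
    constructor
    · rintro ⟨a, b, haI, hbI, hd, hr⟩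
      refine ⟨a, b, haI, hbI, ?_, ?_⟩
      · rwa [distCKeq a b ps pn haI.1 haI.2 hps.1 hps.2] at hd
      · rw [hr, miXY1Yd, miX1Yr, miXYd]
        ring_nf
    · rintro ⟨a, b, haI, hbI, hd, hr⟩
      refine ⟨a, b, haI, hbI, ?_, ?_⟩
      · rwa [distCKeq a b ps pn haI.1 haI.2 hps.1 hps.2]
      · rw [hr, miXY1Yd, miX1Yr, miXYd]
        ring_nf
  rw [hsets]
end
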